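/- Let Γ ∈ M_n(ℂ) be invertible and v, w ∈ ℂⁿ. Define η₁(x,t) := exp(−(1/2)(Γ⁻¹·x + Γ·t))·v and η₂(x,t) := exp((1/2)(Γ⁻¹·x + Γ·t))·w, where exp is the matrix exponential. Then: (i) with a₀ ≡ −1/2 and f₀ ≡ 0, the pair (η₁, η₂) solves the linear system Γ·∂_x η₁ = −(1/2)·η₁, Γ·∂_x η₂ = (1/2)·η₂, ∂_t η₁ = −(1/2)·Γ·η₁, ∂_t η₂ = (1/2)·Γ·η₂; and (ii) if X, Y ∈ M_n(ℂ) satisfy Γ·X + X·Γᴴ = v·vᴴ and Γ·Y + Y·Γᴴ = w·wᴴ, then Ω(x,t) := exp(−(1/2)(Γ⁻¹x + Γt))·X·exp(−(1/2)((Γᴴ)⁻¹x + Γᴴt)) + exp((1/2)(Γ⁻¹x + Γt))·Y·exp((1/2)((Γᴴ)⁻¹x + Γᴴt)) satisfies Γ·Ω(x,t) + Ω(x,t)·Γᴴ = η₁(x,t)·η₁(x,t)ᴴ + η₂(x,t)·η₂(x,t)ᴴ for all (x,t) ∈ ℝ². -/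

import Mathlib

open Matrix NormedSpace

/-- Entrywise partial x-derivative of a matrix-valued function on ℝ × ℝ. -/
noncomputable def pdxM {m k : ℕ} (M : ℝ × ℝ → Matrix (Fin m) (Fin k) ℂ)
    (p : ℝ × ℝ) : Matrix (Fin m) (Fin k) ℂ :=
  Matrix.of fun i j => fderiv ℝ (fun q => M q i j) p (1, 0)

/-- Entrywise partial t-derivative of a matrix-valued function on ℝ × ℝ. -/
noncomputable def pdtM {m k : ℕ} (M : ℝ × ℝ → Matrix (Fin m) (Fin k) ℂ)
    (p : ℝ × ℝ) : Matrix (Fin m) (Fin k) ℂ :=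
  Matrix.of fun i j => fderiv ℝ (fun q => M q i j) p (0, 1)

/-- A vector of ℂⁿ viewed as an n×1 column matrix. -/
def colV {n : ℕ} (η : Fin n → ℂ) : Matrix (Fin n) (Fin 1) ℂ :=
  Matrix.of fun i _ => η i

namespace Stmt8Aux

variable {n : ℕ}

/-- entry extraction after right multiplication, as a CLM -/
noncomputable def ψ (C : Matrix (Fin n) (Fin 1) ℂ) (i : Fin n) (j : Fin 1) :
    Matrix (Fin n) (Fin n) ℂ →L[ℝ] ℂ :=
  LinearMap.toContinuousLinearMap
    { toFun := fun P => (P * C) i j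
      map_add' := fun A B => by
        show ((A + B) * C) i j = _; rw [Matrix.add_mul]; exact Matrix.add_apply _ _ _ _
      map_smul' := fun r A => by
        show ((r • A) * C) i j = _; rw [Matrix.smul_mul]; exact Matrix.smul_apply _ _ _ _ }

lemma key_fderiv (A₁ A₂ : Matrix (Fin n) (Fin n) ℂ) (C : Matrix (Fin n) (Fin 1) ℂ)
    (p : ℝ × ℝ) (i : Fin n) (j : Fin 1) (d : ℝ × ℝ) :
    fderiv ℝ (fun q : ℝ × ℝ => (exp (q.1 • A₁) * exp (q.2 • A₂) * C) i j) p d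
      = ((d.1 • (exp (p.1 • A₁) * A₁ * exp (p.2 • A₂))
          + d.2 • (exp (p.1 • A₁) * (exp (p.2 • A₂) * A₂))) * C) i j := by
  letI : NormedRing (Matrix (Fin n) (Fin n) ℂ) := Matrix.linftyOpNormedRing
  letI : NormedAlgebra ℝ (Matrix (Fin n) (Fin n) ℂ) := Matrix.linftyOpNormedAlgebra
  letI : NormedAlgebra ℂ (Matrix (Fin n) (Fin n) ℂ) := Matrix.linftyOpNormedAlgebra
  have expR : ∀ (A : Matrix (Fin n) (Fin n) ℂ) (t : ℝ),
      HasDerivAt (fun u : ℝ => exp (u • A)) (exp (t • A) * A) t := by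
    intro A t
    have := hasDerivAt_exp_smul_const (𝕂 := ℝ) A t
    exact this
  have hg : HasFDerivAt (fun q : ℝ × ℝ => exp (q.1 • A₁))
      (((1 : ℝ →L[ℝ] ℝ).smulRight (exp (p.1 • A₁) * A₁)).comp
        (ContinuousLinearMap.fst ℝ ℝ ℝ)) p :=
    (expR A₁ p.1).hasFDerivAt.comp p (hasFDerivAt_fst)
  have hh : HasFDerivAt (fun q : ℝ × ℝ => exp (q.2 • A₂))
      (((1 : ℝ →L[ℝ] ℝ).smulRight (exp (p.2 • A₂) * A₂)).comp
        (ContinuousLinearMap.snd ℝ ℝ ℝ)) p :=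
    (expR A₂ p.2).hasFDerivAt.comp p (hasFDerivAt_snd)
  have hmul := hg.mul' hh
  have hfull := ((ψ C i j).hasFDerivAt).comp p hmul
  have heq : fderiv ℝ (fun q : ℝ × ℝ => (exp (q.1 • A₁) * exp (q.2 • A₂) * C) i j) p
      = ((ψ C i j).comp _) := hfull.fderiv
  rw [heq]
  change ((exp (p.1 • A₁) * (d.2 • (exp (p.2 • A₂) * A₂)) + (d.1 • (exp (p.1 • A₁) * A₁)) * exp (p.2 • A₂)) * C) i j = _
  simp [Matrix.mul_smul, Matrix.mul_assoc, ψ, smul_eq_mul, Matrix.add_mul, Matrix.smul_mul, Matrix.add_apply, Matrix.smul_apply,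
    Complex.real_smul]
  ring

lemma pdx_eq (A₁ A₂ : Matrix (Fin n) (Fin n) ℂ) (C : Matrix (Fin n) (Fin 1) ℂ)
    (p : ℝ × ℝ) :
    pdxM (fun q => exp (q.1 • A₁) * exp (q.2 • A₂) * C) p
      = A₁ * (exp (p.1 • A₁) * exp (p.2 • A₂) * C) := by
  have h1 : Commute A₁ (exp (p.1 • A₁)) := ((Commute.refl A₁).smul_right p.1).exp_right
  have hm : exp (p.1 • A₁) * A₁ * exp (p.2 • A₂) * C
      = A₁ * (exp (p.1 • A₁) * exp (p.2 • A₂) * C) := by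
    rw [← Matrix.mul_assoc, ← Matrix.mul_assoc, ← h1.eq]
  ext i j
  simp only [pdxM, Matrix.of_apply]
  rw [key_fderiv A₁ A₂ C p i j (1, 0)]
  simp only [one_smul, zero_smul, add_zero, zero_add, Matrix.mul_assoc] at hm ⊢
  rw [hm]

lemma pdt_eq (A₁ A₂ : Matrix (Fin n) (Fin n) ℂ) (C : Matrix (Fin n) (Fin 1) ℂ)
    (hc : Commute A₁ A₂) (p : ℝ × ℝ) :
    pdtM (fun q => exp (q.1 • A₁) * exp (q.2 • A₂) * C) p
      = A₂ * (exp (p.1 • A₁) * exp (p.2 • A₂) * C) := by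
  have h1 : Commute A₂ (exp (p.1 • A₁)) := (hc.symm.smul_right p.1).exp_right
  have h2 : Commute A₂ (exp (p.2 • A₂)) := ((Commute.refl A₂).smul_right p.2).exp_right
  have hm : exp (p.1 • A₁) * (exp (p.2 • A₂) * A₂) * C
      = A₂ * (exp (p.1 • A₁) * exp (p.2 • A₂) * C) := by
    rw [← h2.eq, ← Matrix.mul_assoc, ← h1.eq, Matrix.mul_assoc, Matrix.mul_assoc,
      Matrix.mul_assoc]
  ext i j
  simp only [pdtM, Matrix.of_apply]
  rw [key_fderiv A₁ A₂ C p i j (0, 1)]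
  simp only [one_smul, zero_smul, add_zero, zero_add, Matrix.mul_assoc] at hm ⊢
  rw [hm]

lemma commGinv {Γ : Matrix (Fin n) (Fin n) ℂ} (hΓ : IsUnit Γ) : Commute Γ⁻¹ Γ := by
  have hdet := (Matrix.isUnit_iff_isUnit_det Γ).mp hΓ
  show Γ⁻¹ * Γ = Γ * Γ⁻¹
  rw [Matrix.nonsing_inv_mul Γ hdet, Matrix.mul_nonsing_inv Γ hdet]

lemma split {Γ : Matrix (Fin n) (Fin n) ℂ} (hΓ : IsUnit Γ) (c : ℂ)
    (C : Matrix (Fin n) (Fin 1) ℂ) :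
    (fun p : ℝ × ℝ => exp (c • ((p.1 : ℂ) • Γ⁻¹ + (p.2 : ℂ) • Γ)) * C)
      = fun q : ℝ × ℝ => exp (q.1 • (c • Γ⁻¹)) * exp (q.2 • (c • Γ)) * C := by
  funext p
  have hcom : Commute (p.1 • (c • Γ⁻¹)) (p.2 • (c • Γ)) :=
    ((((commGinv hΓ).smul_left c).smul_right c).smul_left p.1).smul_right p.2
  have e1 : c • ((p.1 : ℂ) • Γ⁻¹) = p.1 • (c • Γ⁻¹) := by
    rw [smul_comm, ← Complex.coe_algebraMap, algebraMap_smul]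
  have e2 : c • ((p.2 : ℂ) • Γ) = p.2 • (c • Γ) := by
    rw [smul_comm, ← Complex.coe_algebraMap, algebraMap_smul]
  rw [smul_add, e1, e2, Matrix.exp_add_of_commute _ _ hcom]

lemma exp_adjoint {Γ : Matrix (Fin n) (Fin n) ℂ} (c : ℂ) (hc : star c = c)
    (p : ℝ × ℝ) :
    exp (c • ((p.1 : ℂ) • (Γᴴ)⁻¹ + (p.2 : ℂ) • Γᴴ))
      = (exp (c • ((p.1 : ℂ) • Γ⁻¹ + (p.2 : ℂ) • Γ)))ᴴ := by
  rw [← Matrix.exp_conjTranspose]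
  congr 1
  simp [Matrix.conjTranspose_smul, Matrix.conjTranspose_add,
    Matrix.conjTranspose_nonsing_inv, Complex.star_def, Complex.conj_ofReal, hc]

lemma lyap_conj (Γ E X : Matrix (Fin n) (Fin n) ℂ) (V : Matrix (Fin n) (Fin 1) ℂ)
    (hE : Γ * E = E * Γ) (hX : Γ * X + X * Γᴴ = V * Vᴴ) :
    Γ * (E * X * Eᴴ) + (E * X * Eᴴ) * Γᴴ = (E * V) * (E * V)ᴴ := by
  have h2 : Eᴴ * Γᴴ = Γᴴ * Eᴴ := by
    rw [← Matrix.conjTranspose_mul, hE, Matrix.conjTranspose_mul]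
  have e1 : Γ * (E * X * Eᴴ) = E * (Γ * X) * Eᴴ := by
    rw [← Matrix.mul_assoc, ← Matrix.mul_assoc, hE, Matrix.mul_assoc E Γ X]
  have e2 : (E * X * Eᴴ) * Γᴴ = E * (X * Γᴴ) * Eᴴ := by
    rw [Matrix.mul_assoc (E * X) Eᴴ Γᴴ, h2, ← Matrix.mul_assoc, Matrix.mul_assoc E X Γᴴ]
  rw [e1, e2, ← Matrix.add_mul, ← Matrix.mul_add, hX, Matrix.conjTranspose_mul,
    ← Matrix.mul_assoc E V Vᴴ, Matrix.mul_assoc (E * V) Vᴴ Eᴴ]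

end Stmt8Aux

open Stmt8Aux in
theorem stmt_8 {n : ℕ} (Γ : Matrix (Fin n) (Fin n) ℂ) (hΓ : IsUnit Γ)
    (v w : Fin n → ℂ)
    (η₁ η₂ : ℝ × ℝ → Matrix (Fin n) (Fin 1) ℂ)
    (hη₁ : η₁ = fun p => NormedSpace.exp
        (-((1 : ℂ)/2) • ((p.1 : ℂ) • Γ⁻¹ + (p.2 : ℂ) • Γ)) * colV v)
    (hη₂ : η₂ = fun p => NormedSpace.exp
        (((1 : ℂ)/2) • ((p.1 : ℂ) • Γ⁻¹ + (p.2 : ℂ) • Γ)) * colV w) :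
    -- (i) the linear system with a₀ ≡ -1/2 and f₀ ≡ 0
    ((∀ p, Γ * pdxM η₁ p = -((1 : ℂ)/2) • η₁ p) ∧
     (∀ p, Γ * pdxM η₂ p = ((1 : ℂ)/2) • η₂ p) ∧
     (∀ p, pdtM η₁ p = -((1 : ℂ)/2) • (Γ * η₁ p)) ∧
     (∀ p, pdtM η₂ p = ((1 : ℂ)/2) • (Γ * η₂ p))) ∧
    -- (ii) the corresponding solution of the Lyapunov equation
    (∀ X Y : Matrix (Fin n) (Fin n) ℂ,
      Γ * X + X * Γᴴ = colV v * (colV v)ᴴ →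
      Γ * Y + Y * Γᴴ = colV w * (colV w)ᴴ →
      ∀ p : ℝ × ℝ,
        Γ * (NormedSpace.exp (-((1 : ℂ)/2) • ((p.1 : ℂ) • Γ⁻¹ + (p.2 : ℂ) • Γ)) * X *
              NormedSpace.exp (-((1 : ℂ)/2) • ((p.1 : ℂ) • (Γᴴ)⁻¹ + (p.2 : ℂ) • Γᴴ))
            + NormedSpace.exp (((1 : ℂ)/2) • ((p.1 : ℂ) • Γ⁻¹ + (p.2 : ℂ) • Γ)) * Y *
              NormedSpace.exp (((1 : ℂ)/2) • ((p.1 : ℂ) • (Γᴴ)⁻¹ + (p.2 : ℂ) • Γᴴ)))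
        + (NormedSpace.exp (-((1 : ℂ)/2) • ((p.1 : ℂ) • Γ⁻¹ + (p.2 : ℂ) • Γ)) * X *
              NormedSpace.exp (-((1 : ℂ)/2) • ((p.1 : ℂ) • (Γᴴ)⁻¹ + (p.2 : ℂ) • Γᴴ))
            + NormedSpace.exp (((1 : ℂ)/2) • ((p.1 : ℂ) • Γ⁻¹ + (p.2 : ℂ) • Γ)) * Y *
              NormedSpace.exp (((1 : ℂ)/2) • ((p.1 : ℂ) • (Γᴴ)⁻¹ + (p.2 : ℂ) • Γᴴ))) * Γᴴ
        = η₁ p * (η₁ p)ᴴ + η₂ p * (η₂ p)ᴴ) := by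
  subst hη₁ hη₂
  have hdet := (Matrix.isUnit_iff_isUnit_det Γ).mp hΓ
  have hcomm : ∀ c : ℂ, Commute (c • Γ⁻¹) (c • Γ) :=
    fun c => ((commGinv hΓ).smul_left c).smul_right c
  constructor
  · refine ⟨?_, ?_, ?_, ?_⟩
    · intro p
      rw [split hΓ (-((1 : ℂ)/2)) (colV v), pdx_eq, ← Matrix.mul_assoc, Matrix.mul_smul,
        Matrix.mul_nonsing_inv Γ hdet, Matrix.smul_mul, Matrix.one_mul]
    · intro p
      rw [split hΓ (((1 : ℂ)/2)) (colV w), pdx_eq, ← Matrix.mul_assoc, Matrix.mul_smul,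
        Matrix.mul_nonsing_inv Γ hdet, Matrix.smul_mul, Matrix.one_mul]
    · intro p
      rw [split hΓ (-((1 : ℂ)/2)) (colV v), pdt_eq _ _ _ (hcomm _) p, Matrix.smul_mul]
    · intro p
      rw [split hΓ (((1 : ℂ)/2)) (colV w), pdt_eq _ _ _ (hcomm _) p, Matrix.smul_mul]
  · intro X Y hX hY p
    have hcommM : ∀ c : ℂ,
        Commute Γ (c • ((p.1 : ℂ) • Γ⁻¹ + (p.2 : ℂ) • Γ)) := fun c =>
      ((((commGinv hΓ).symm.smul_right ((p.1 : ℂ))).add_right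
        ((Commute.refl Γ).smul_right ((p.2 : ℂ)))).smul_right c)
    have hE : ∀ c : ℂ,
        Γ * NormedSpace.exp (c • ((p.1 : ℂ) • Γ⁻¹ + (p.2 : ℂ) • Γ))
          = NormedSpace.exp (c • ((p.1 : ℂ) • Γ⁻¹ + (p.2 : ℂ) • Γ)) * Γ :=
      fun c => ((hcommM c).exp_right).eq
    rw [exp_adjoint (-((1 : ℂ)/2)) (by simp) p, exp_adjoint (((1 : ℂ)/2)) (by simp) p]
    have l1 := lyap_conj Γ _ X (colV v) (hE (-((1 : ℂ)/2))) hX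
    have l2 := lyap_conj Γ _ Y (colV w) (hE (((1 : ℂ)/2))) hY
    calc Γ * (_ + _) + (_ + _) * Γᴴ
        = (Γ * (NormedSpace.exp (-((1 : ℂ)/2) • ((p.1 : ℂ) • Γ⁻¹ + (p.2 : ℂ) • Γ)) * X *
              (NormedSpace.exp (-((1 : ℂ)/2) • ((p.1 : ℂ) • Γ⁻¹ + (p.2 : ℂ) • Γ)))ᴴ)
          + (NormedSpace.exp (-((1 : ℂ)/2) • ((p.1 : ℂ) • Γ⁻¹ + (p.2 : ℂ) • Γ)) * X *
              (NormedSpace.exp (-((1 : ℂ)/2) • ((p.1 : ℂ) • Γ⁻¹ + (p.2 : ℂ) • Γ)))ᴴ) * Γᴴ)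
          + (Γ * (NormedSpace.exp (((1 : ℂ)/2) • ((p.1 : ℂ) • Γ⁻¹ + (p.2 : ℂ) • Γ)) * Y *
              (NormedSpace.exp (((1 : ℂ)/2) • ((p.1 : ℂ) • Γ⁻¹ + (p.2 : ℂ) • Γ)))ᴴ)
          + (NormedSpace.exp (((1 : ℂ)/2) • ((p.1 : ℂ) • Γ⁻¹ + (p.2 : ℂ) • Γ)) * Y *
              (NormedSpace.exp (((1 : ℂ)/2) • ((p.1 : ℂ) • Γ⁻¹ + (p.2 : ℂ) • Γ)))ᴴ) * Γᴴ) := by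
          rw [Matrix.mul_add, Matrix.add_mul]; abel
      _ = _ := by rw [l1, l2]
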